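/- Let A be a unital algebra over ℂ and ∂ : A → A ⊗ A a derivation (for the natural A-bimodule structure on A ⊗ A) which is a coassociative comultiplication. Suppose X ∈ A with ∂X = 1 ⊗ 1. If α = (a_{ij}) ∈ Mₙ(A) is an invertible corepresentation of (A, ∂) (i.e. ∂a_{ij} = Σₖ a_{ik} ⊗ a_{kj}), then α⁻¹ = (n_{ij} - Xδ_{ij}) for some elements n_{ij} in ker ∂. -/

import Mathlib

open TensorProduct

variable {A : Type*} [Ring A] [Algebra ℂ A]

/-- `d : A → A ⊗ A` is a derivation for the natural `A`-bimodule structure on `A ⊗ A`,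
i.e. `d(ab) = a·d(b) + d(a)·b` where `a·(x⊗y) = ax⊗y` and `(x⊗y)·b = x⊗yb`. -/
def IsTensorDerivation (d : A →ₗ[ℂ] A ⊗[ℂ] A) : Prop :=
  ∀ a b : A, d (a * b) =
    LinearMap.rTensor A (LinearMap.mulLeft ℂ a) (d b) +
    LinearMap.lTensor A (LinearMap.mulRight ℂ b) (d a)

/-- `∂` is a coassociative comultiplication: `(d ⊗ id) ∘ d = (id ⊗ d) ∘ d`
(up to the associator). -/
def IsCoassociative (d : A →ₗ[ℂ] A ⊗[ℂ] A) : Prop :=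
  ∀ a : A, TensorProduct.assoc ℂ A A A (LinearMap.rTensor A d (d a)) =
    LinearMap.lTensor A d (d a)

/-- `α` is a corepresentation of `(A, d)`: `d a_{ij} = Σₖ a_{ik} ⊗ a_{kj}`. -/
def IsCorepresentation {n : ℕ} (d : A →ₗ[ℂ] A ⊗[ℂ] A)
    (α : Matrix (Fin n) (Fin n) A) : Prop :=
  ∀ i j : Fin n, d (α i j) = ∑ k : Fin n, α i k ⊗ₜ[ℂ] α k j

/-- Auxiliary: `rTensor (mulLeft ·)` applied to a fixed element is additive over sums. -/
lemma rT_mulLeft_sum {ι : Type*} (s : Finset ι) (f : ι → A) (x : A ⊗[ℂ] A) :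
    LinearMap.rTensor A (LinearMap.mulLeft ℂ (∑ i ∈ s, f i)) x =
      ∑ i ∈ s, LinearMap.rTensor A (LinearMap.mulLeft ℂ (f i)) x := by
  classical
  have hadd : ∀ a b : A, LinearMap.rTensor A (LinearMap.mulLeft ℂ (a + b)) x =
      LinearMap.rTensor A (LinearMap.mulLeft ℂ a) x +
        LinearMap.rTensor A (LinearMap.mulLeft ℂ b) x := by
    intro a b
    have h : LinearMap.mulLeft ℂ (a + b) = LinearMap.mulLeft ℂ a + LinearMap.mulLeft ℂ b := by
      ext c; simp [add_mul]
    rw [h, LinearMap.rTensor_add, LinearMap.add_apply]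
  induction s using Finset.induction with
  | empty => simp
  | insert _ _ h ih => rw [Finset.sum_insert h, Finset.sum_insert h, hadd, ih]

/-- If `∂` is a coassociative derivation-comultiplication on a unital `ℂ`-algebra `A`,
`X ∈ A` satisfies `dX = 1 ⊗ 1`, and `α` is an invertible corepresentation of `(A, d)`,
then `α⁻¹ = (n_{ij} - X δ_{ij})` for some `n_{ij} ∈ ker d`. -/
theorem invertible_corepresentation_eq {n : ℕ} (d : A →ₗ[ℂ] A ⊗[ℂ] A)
    (hder : IsTensorDerivation d) (hco : IsCoassociative d)
    (X : A) (hX : d X = (1 : A) ⊗ₜ[ℂ] (1 : A))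
    (α : Matrix (Fin n) (Fin n) A) (hα : IsCorepresentation d α) (hinv : IsUnit α) :
    ∃ N : Matrix (Fin n) (Fin n) A, (∀ i j, d (N i j) = 0) ∧
      ∀ i j, Ring.inverse α i j = N i j - (if i = j then X else 0) := by
  classical
  set β := Ring.inverse α with hβdef
  have hβ1 : α * β = 1 := Ring.mul_inverse_cancel α hinv
  have hβ2 : β * α = 1 := Ring.inverse_mul_cancel α hinv
  have hd1 : d (1 : A) = 0 := by
    have h := hder 1 1
    rw [one_mul, LinearMap.mulLeft_one, LinearMap.mulRight_one, LinearMap.rTensor_id,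
      LinearMap.lTensor_id, LinearMap.id_apply] at h
    exact (right_eq_add.mp h)
  have key : ∀ i j, ∑ k, LinearMap.rTensor A (LinearMap.mulLeft ℂ (α i k)) (d (β k j))
      = - (α i j ⊗ₜ[ℂ] (1 : A)) := by
    intro i j
    have h1 : d ((α * β) i j) = 0 := by
      rw [hβ1]
      by_cases h : i = j <;> simp [Matrix.one_apply, h, hd1]
    rw [Matrix.mul_apply, map_sum] at h1
    have h2 : ∀ k, d (α i k * β k j) =
        LinearMap.rTensor A (LinearMap.mulLeft ℂ (α i k)) (d (β k j)) +
          ∑ l, α i l ⊗ₜ[ℂ] (α l k * β k j) := by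
      intro k
      rw [hder, hα]
      congr 1
      rw [map_sum]
      simp [LinearMap.lTensor_tmul]
    rw [Finset.sum_congr rfl (fun k _ => h2 k), Finset.sum_add_distrib] at h1
    have h3 : ∑ k, ∑ l, α i l ⊗ₜ[ℂ] (α l k * β k j) = α i j ⊗ₜ[ℂ] (1 : A) := by
      rw [Finset.sum_comm]
      have h4 : ∀ l : Fin n, ∑ k, α i l ⊗ₜ[ℂ] (α l k * β k j)
          = α i l ⊗ₜ[ℂ] ((1 : Matrix (Fin n) (Fin n) A) l j) := by
        intro l
        rw [← tmul_sum, ← Matrix.mul_apply, hβ1]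
      rw [Finset.sum_congr rfl (fun l _ => h4 l)]
      have h5 : ∀ l : Fin n, α i l ⊗ₜ[ℂ] ((1 : Matrix (Fin n) (Fin n) A) l j)
          = if l = j then α i l ⊗ₜ[ℂ] (1 : A) else 0 := by
        intro l
        by_cases h : l = j <;> simp [Matrix.one_apply, h]
      rw [Finset.sum_congr rfl (fun l _ => h5 l)]
      simp
    rw [h3] at h1
    exact eq_neg_of_add_eq_zero_left h1
  have hdβ : ∀ m j, d (β m j) = - ((if m = j then (1 : A) else 0) ⊗ₜ[ℂ] (1 : A)) := by
    intro m j
    have e1 : ∑ i, LinearMap.rTensor A (LinearMap.mulLeft ℂ (β m i))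
          (∑ k, LinearMap.rTensor A (LinearMap.mulLeft ℂ (α i k)) (d (β k j)))
        = ∑ i, LinearMap.rTensor A (LinearMap.mulLeft ℂ (β m i)) (- (α i j ⊗ₜ[ℂ] (1 : A))) :=
      Finset.sum_congr rfl fun i _ => by rw [key i j]
    have e2 : ∑ i, LinearMap.rTensor A (LinearMap.mulLeft ℂ (β m i))
          (∑ k, LinearMap.rTensor A (LinearMap.mulLeft ℂ (α i k)) (d (β k j)))
        = d (β m j) := by
      have : ∀ i, LinearMap.rTensor A (LinearMap.mulLeft ℂ (β m i))
            (∑ k, LinearMap.rTensor A (LinearMap.mulLeft ℂ (α i k)) (d (β k j)))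
          = ∑ k, LinearMap.rTensor A (LinearMap.mulLeft ℂ (β m i * α i k)) (d (β k j)) := by
        intro i
        rw [map_sum]
        refine Finset.sum_congr rfl fun k _ => ?_
        rw [LinearMap.mulLeft_mul, LinearMap.rTensor_comp_apply]
      rw [Finset.sum_congr rfl (fun i _ => this i), Finset.sum_comm]
      have h6 : ∀ k : Fin n, ∑ i, LinearMap.rTensor A (LinearMap.mulLeft ℂ (β m i * α i k))
            (d (β k j))
          = LinearMap.rTensor A (LinearMap.mulLeft ℂ ((1 : Matrix (Fin n) (Fin n) A) m k))
            (d (β k j)) := by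
        intro k
        rw [← rT_mulLeft_sum, ← Matrix.mul_apply, hβ2]
      rw [Finset.sum_congr rfl (fun k _ => h6 k)]
      have h7 : ∀ k : Fin n, LinearMap.rTensor A
            (LinearMap.mulLeft ℂ ((1 : Matrix (Fin n) (Fin n) A) m k)) (d (β k j))
          = if k = m then d (β k j) else 0 := by
        intro k
        by_cases h : k = m
        · simp [Matrix.one_apply, h, LinearMap.mulLeft_one]
        · have : m ≠ k := fun hh => h hh.symm
          simp [Matrix.one_apply, this, h, LinearMap.mulLeft_zero_eq_zero]
      rw [Finset.sum_congr rfl (fun k _ => h7 k)]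
      simp
    rw [e2] at e1
    rw [e1]
    have e3 : ∀ i : Fin n, LinearMap.rTensor A (LinearMap.mulLeft ℂ (β m i))
          (- (α i j ⊗ₜ[ℂ] (1 : A)))
        = - ((β m i * α i j) ⊗ₜ[ℂ] (1 : A)) := by
      intro i
      rw [map_neg, LinearMap.rTensor_tmul, LinearMap.mulLeft_apply]
    rw [Finset.sum_congr rfl (fun i _ => e3 i), Finset.sum_neg_distrib, ← sum_tmul,
      ← Matrix.mul_apply, hβ2, Matrix.one_apply]
  refine ⟨fun i j => β i j + (if i = j then X else 0), ?_, ?_⟩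
  · intro i j
    simp only [map_add, hdβ i j]
    by_cases h : i = j <;> simp [h, hX]
  · intro i j
    simp [hβdef]
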